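/- arXiv:1909.13526 — 2 statements merged into one kernel-verified Lean document; each statement's English description precedes it below -/
import Mathlib

section
/- Let n > 0 and let d_1, ..., d_n be nonzero integers. Define the binary operation l * m = 2m - l on the integers. Then the closure of the set {0, d_1, ..., d_n} under this operation equals dℤ = {0, ±d, ±2d, ...}, where d = gcd(d_1, ..., d_n). -/
/-- The closure of a set `S ⊆ ℤ` under the dihedral quandle operation `l * m = 2 * m - l`:
the smallest subset of `ℤ` containing `S` and closed under the operation. -/
def dihClosure (S : Set ℤ) : Set ℤ :=
  ⋂₀ {T : Set ℤ | S ⊆ T ∧ ∀ a ∈ T, ∀ b ∈ T, 2 * b - a ∈ T}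

/-- For nonzero integers `d 0, …, d (n-1)` (`n > 0`), the closure of `{0, d 0, …, d (n-1)}`
under the operation `l * m = 2 * m - l` equals `dℤ`, where `d = gcd (d 0, …, d (n-1))`. -/
theorem dihClosure_eq_gcd_multiples (n : ℕ) (hn : 0 < n) (d : Fin n → ℤ)
    (hd : ∀ i, d i ≠ 0) :
    dihClosure ({0} ∪ Set.range d) = {x : ℤ | Finset.univ.gcd d ∣ x} := by
  classical
  set g : ℤ := Finset.univ.gcd d with hg
  set S : Set ℤ := ({0} : Set ℤ) ∪ Set.range d with hS
  have hSC : S ⊆ dihClosure S := fun x hx => Set.mem_sInter.2 fun T hT => hT.1 hx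
  have hC : ∀ a ∈ dihClosure S, ∀ b ∈ dihClosure S, 2 * b - a ∈ dihClosure S := by
    intro a ha b hb
    exact Set.mem_sInter.2 fun T hT =>
      hT.2 a (Set.mem_sInter.1 ha T hT) b (Set.mem_sInter.1 hb T hT)
  have h0 : (0 : ℤ) ∈ dihClosure S := hSC (Or.inl rfl)
  have hdC : ∀ i, d i ∈ dihClosure S := fun i => hSC (Or.inr ⟨i, rfl⟩)
  have hneg : ∀ a ∈ dihClosure S, -a ∈ dihClosure S := by
    intro a ha
    have := hC a ha 0 h0
    simpa using this
  -- the set of "translations preserving the closure" is an additive subgroup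
  let H : AddSubgroup ℤ :=
    { carrier := {z | ∀ c ∈ dihClosure S, c + z ∈ dihClosure S}
      zero_mem' := by intro c hc; simpa using hc
      add_mem' := by
        intro z w hz hw c hc
        have := hw (c + z) (hz c hc)
        simpa [add_assoc] using this
      neg_mem' := by
        intro z hz c hc
        have h1 := hz c hc
        have := hC (c + z) h1 c hc
        have e : 2 * c - (c + z) = c + -z := by ring
        rwa [e] at this }
  have h2d : ∀ i, (2 * d i) ∈ H := by
    intro i c hc
    have := hC (-c) (hneg c hc) (d i) (hdC i)
    have e : 2 * d i - -c = c + 2 * d i := by ring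
    rwa [e] at this
  have hgH : 2 * g ∈ H := by
    have key : ∀ s : Finset (Fin n), 2 * s.gcd d ∈ H := by
      intro s
      induction s using Finset.induction with
      | empty => simpa using H.zero_mem
      | @insert i s hins ih =>
        rw [Finset.gcd_insert]
        set a := d i
        set b := s.gcd d
        have hab : (gcd a b : ℤ) = a * Int.gcdA a b + b * Int.gcdB a b := by
          rw [← Int.coe_gcd, Int.gcd_eq_gcd_ab a b]
        have e : 2 * gcd a b =
            Int.gcdA a b * (2 * a) + Int.gcdB a b * (2 * b) := by
          rw [hab]; ring
        rw [e]
        have h1 : Int.gcdA a b * (2 * a) ∈ H := by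
          have := H.zsmul_mem (h2d i) (Int.gcdA a b)
          simpa [zsmul_eq_mul] using this
        have h2 : Int.gcdB a b * (2 * b) ∈ H := by
          have := H.zsmul_mem ih (Int.gcdB a b)
          simpa [zsmul_eq_mul] using this
        exact H.add_mem h1 h2
    exact key Finset.univ
  have hg0 : g ≠ 0 := by
    intro h
    have := Finset.gcd_eq_zero_iff.1 (hg ▸ h.symm).symm
    exact hd ⟨0, hn⟩ (this _ (Finset.mem_univ _))
  have hgd : ∀ i, g ∣ d i := fun i => Finset.gcd_dvd (Finset.mem_univ i)
  ext x
  constructor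
  · intro hx
    refine Set.mem_sInter.1 hx {y : ℤ | g ∣ y} ⟨?_, ?_⟩
    · rintro y (rfl | ⟨i, rfl⟩)
      · exact dvd_zero g
      · exact hgd i
    · intro a ha b hb
      exact dvd_sub (Dvd.dvd.mul_left hb 2) ha
  · intro hx
    obtain ⟨k, hk⟩ := hx
    -- translations by multiples of 2g preserve the closure
    have htrans : ∀ m : ℤ, ∀ c ∈ dihClosure S, c + m * (2 * g) ∈ dihClosure S := by
      intro m c hc
      have := H.zsmul_mem hgH m
      have h2 : m * (2 * g) ∈ H := by simpa [zsmul_eq_mul] using this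
      exact h2 c hc
    rcases Int.even_or_odd k with ⟨m, hm⟩ | hodd
    · have := htrans m 0 h0
      have e : x = 0 + m * (2 * g) := by rw [hk, hm]; ring
      rwa [← e] at this
    · -- k odd: find i with d i / g odd
      choose e he using hgd
      have hoi : ∃ i, Odd (e i) := by
        by_contra h
        push_neg at h
        have h2g : ∀ i, 2 * g ∣ d i := by
          intro i
          rcases Int.not_odd_iff_even.1 (h i) with ⟨m, hm⟩
          exact ⟨m, by rw [he i, hm]; ring⟩
        have : 2 * g ∣ g := by
          rw [hg]
          exact Finset.dvd_gcd fun i _ => h2g i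
        obtain ⟨c, hc⟩ := this
        have h1 : (1 : ℤ) = 2 * c :=
          mul_left_cancel₀ hg0 (by linear_combination hc)
        omega
      obtain ⟨i, hi⟩ := hoi
      obtain ⟨m, hm⟩ := hodd.sub_odd hi
      have := htrans m (d i) (hdC i)
      have ex : x = d i + m * (2 * g) := by
        have : k - e i = 2 * m := by omega
        have hki : k = e i + 2 * m := by omega
        rw [hk, he i, hki]; ring
      rwa [← ex] at this
end

section
/- Let ρ : G → SU(2) be a group homomorphism, let x, z ∈ G, and suppose ρ([G,G]) is abelian and x lies in the commutator subgroup [G,G]. If ρ(x) is a diagonal matrix, then ρ(z x z⁻¹) is also a diagonal matrix. -/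
/-- Let `ρ : G → SU(2)` be a homomorphism (realized as a homomorphism into the unitary group
of `2 × 2` complex matrices, with all values of determinant `1`), suppose `ρ` is metabelian
(the image of the commutator subgroup is abelian), and let `x ∈ [G, G]`.
If `ρ x` is a diagonal matrix, then so is `ρ (z * x * z⁻¹)` for any `z ∈ G`. -/
theorem metabelian_conj_diagonal {G : Type*} [Group G]
    (ρ : G →* Matrix.unitaryGroup (Fin 2) ℂ)
    (hdet : ∀ g : G, ((ρ g : Matrix (Fin 2) (Fin 2) ℂ)).det = 1)
    (hmet : ∀ a b : G, a ∈ commutator G → b ∈ commutator G → Commute (ρ a) (ρ b))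
    (x z : G) (hx : x ∈ commutator G)
    (hdiag : ((ρ x : Matrix (Fin 2) (Fin 2) ℂ)).IsDiag) :
    ((ρ (z * x * z⁻¹) : Matrix (Fin 2) (Fin 2) ℂ)).IsDiag := by
  set A : Matrix (Fin 2) (Fin 2) ℂ := (ρ x : Matrix (Fin 2) (Fin 2) ℂ) with hAdef
  have hx' : z * x * z⁻¹ ∈ commutator G :=
    (Subgroup.commutator_normal ⊤ ⊤).conj_mem x hx z
  by_cases h : A 0 0 = A 1 1
  · -- scalar case: A = c • 1 is central, so ρ (z*x*z⁻¹) = ρ x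
    have hA : A = A 0 0 • (1 : Matrix (Fin 2) (Fin 2) ℂ) := by
      ext i j
      by_cases hij : i = j
      · subst hij
        fin_cases i <;> simp [Matrix.one_apply, h]
      · simp [Matrix.one_apply, hij, hdiag hij]
    have hcom : ρ z * ρ x = ρ x * ρ z := by
      apply Subtype.ext
      push_cast
      rw [← hAdef, hA]
      simp [Matrix.mul_smul, Matrix.smul_mul]
    have hkey : ρ (z * x * z⁻¹) = ρ x := by
      rw [map_mul, map_mul, hcom, mul_assoc, ← map_mul, mul_inv_cancel, map_one, mul_one]
    rw [hkey]
    exact hdiag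
  · -- nonscalar case: ρ (z*x*z⁻¹) commutes with diagonal A having distinct entries
    have hc := hmet x (z * x * z⁻¹) hx hx'
    have hcm : A * (ρ (z * x * z⁻¹) : Matrix (Fin 2) (Fin 2) ℂ)
        = (ρ (z * x * z⁻¹) : Matrix (Fin 2) (Fin 2) ℂ) * A := by
      have := congrArg (Subtype.val) hc
      push_cast at this
      exact this
    set B : Matrix (Fin 2) (Fin 2) ℂ := (ρ (z * x * z⁻¹) : Matrix (Fin 2) (Fin 2) ℂ)
    intro i j hij
    have h01 : A 0 1 = 0 := hdiag (by decide)
    have h10 : A 1 0 = 0 := hdiag (by decide)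
    fin_cases i <;> fin_cases j <;> simp only [] at hij ⊢
    · exact absurd rfl hij
    · have e := congrFun (congrFun hcm 0) 1
      simp [Matrix.mul_apply, Fin.sum_univ_two, h01, h10] at e
      have h2 : B 0 1 * (A 0 0 - A 1 1) = 0 := by linear_combination e
      rcases mul_eq_zero.mp h2 with h' | h'
      · exact h'
      · exact absurd (sub_eq_zero.mp h') h
    · have e := congrFun (congrFun hcm 1) 0
      simp [Matrix.mul_apply, Fin.sum_univ_two, h01, h10] at e
      have h2 : B 1 0 * (A 1 1 - A 0 0) = 0 := by linear_combination e
      rcases mul_eq_zero.mp h2 with h' | h'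
      · exact h'
      · exact absurd (sub_eq_zero.mp h').symm h
    · exact absurd rfl hij
end
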